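/- For ρ > 1, a > -1, and nonnegative integers m, n: ∫_0^∞ L_m^{(a)}(ρx) L_n^{(a)}(x) e^{-(ρ+1)x/2} x^a dx = (-1)^m (Γ(a+n+1)/n!) ((a+1)_m/m!) (2/(ρ+1))^{a+1} ((ρ-1)/(ρ+1))^{n+m} M_n(m; a+1; ((ρ-1)/(ρ+1))²). -/

import Mathlib

open Complex Finset

/-- Pochhammer symbol `(a)_n` for complex `a`. -/
noncomputable def poch (a : ℂ) (n : ℕ) : ℂ := ∏ i ∈ Finset.range n, (a + i)

/-- Confluent hypergeometric function `₁F₁(a; b; x)`. -/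
noncomputable def F11 (a b x : ℂ) : ℂ :=
  ∑' k : ℕ, poch a k * x ^ k / (poch b k * k.factorial)

/-- Gauss hypergeometric function `₂F₁(a, b; c; x)`. -/
noncomputable def F21 (a b c x : ℂ) : ℂ :=
  ∑' k : ℕ, poch a k * poch b k * x ^ k / (poch c k * k.factorial)

lemma poch_zero (a : ℂ) : poch a 0 = 1 := by simp [poch]

lemma poch_succ (a : ℂ) (n : ℕ) : poch a (n + 1) = poch a n * (a + n) := by
  simp [poch, Finset.prod_range_succ]

lemma poch_one (a : ℂ) : poch a 1 = a := by simp [poch]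

lemma poch_add (a : ℂ) (i j : ℕ) : poch a (i + j) = poch a i * poch (a + i) j := by
  induction j with
  | zero => simp [poch_zero]
  | succ j ih =>
      rw [← Nat.add_assoc, poch_succ, ih, poch_succ]
      push_cast
      ring

lemma poch_neg_nat (n i : ℕ) : poch (-(n : ℂ)) i = (-1) ^ i * (n.descFactorial i : ℂ) := by
  induction i with
  | zero => simp [poch_zero]
  | succ i ih =>
      rw [poch_succ, ih, Nat.descFactorial_succ]
      rcases le_or_gt i n with h | h
      · have : -(n : ℂ) + i = -((n - i : ℕ) : ℂ) := by
          push_cast [Nat.cast_sub h]; ring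
        rw [this]
        push_cast
        ring
      · rw [Nat.descFactorial_eq_zero_iff_lt.2 h, Nat.sub_eq_zero_of_le h.le]
        push_cast
        ring

lemma poch_neg_nat_of_lt {n i : ℕ} (h : n < i) : poch (-(n : ℂ)) i = 0 := by
  rw [poch_neg_nat, Nat.descFactorial_eq_zero_iff_lt.2 h]
  simp

lemma poch_ne_zero_of_pos {b : ℝ} (hb : 0 < b) (i : ℕ) : poch (b : ℂ) i ≠ 0 := by
  refine Finset.prod_ne_zero_iff.2 fun j _ => ?_
  have : ((b : ℂ) + j) = ((b + j : ℝ) : ℂ) := by push_cast; ring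
  rw [this]
  simp only [ne_eq, Complex.ofReal_eq_zero]
  positivity

lemma poch_shift (y : ℂ) (k : ℕ) :
    poch (y + 1) (k + 1) = poch y (k + 1) + (k + 1) * poch (y + 1) k := by
  have h1 : poch y (k + 1) = y * poch (y + 1) k := by
    have := poch_add y 1 k
    simpa [poch_one, Nat.add_comm] using this
  rw [poch_succ, h1]
  push_cast
  ring

/-- rising-factorial Chu–Vandermonde -/
lemma poch_vander (x : ℂ) : ∀ j k : ℕ, poch (x + j) k =
    ∑ i ∈ Finset.range (j + 1),
      (j.choose i : ℂ) * (k.choose i : ℂ) * (i.factorial : ℂ) * poch (x + i) (k - i) := by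
  intro j
  induction j generalizing x with
  | zero => intro k; simp [poch]
  | succ j ih =>
      intro k
      have split : ∀ g : ℕ → ℂ, ∑ i ∈ Finset.range (j + 2), ((j+1).choose i : ℂ) * g i =
          (∑ i ∈ Finset.range (j + 1), (j.choose i : ℂ) * g i) +
          (∑ i ∈ Finset.range (j + 1), (j.choose i : ℂ) * g (i + 1)) := by
        intro g
        rw [Finset.sum_range_succ' (fun i => ((j+1).choose i : ℂ) * g i)]
        have h1 : ∀ i, ((j+1).choose (i+1) : ℂ) = (j.choose i : ℂ) + (j.choose (i+1) : ℂ) := by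
          intro i; rw [Nat.choose_succ_succ]; push_cast; ring
        simp_rw [h1, add_mul, Finset.sum_add_distrib]
        rw [Finset.sum_range_succ (fun i => (j.choose (i+1) : ℂ) * g (i+1))]
        simp only [Nat.choose_succ_self, Nat.cast_zero, zero_mul, add_zero, Nat.choose_zero_right,
          Nat.cast_one, one_mul]
        rw [Finset.sum_range_succ' (fun i => (j.choose i : ℂ) * g i) j]
        simp only [Nat.choose_zero_right, Nat.cast_one, one_mul]
        ring
      have hgoal : ∑ i ∈ Finset.range (j+1+1),
          ((j+1).choose i : ℂ) * (k.choose i : ℂ) * (i.factorial : ℂ) * poch (x+i) (k-i)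
          = ∑ i ∈ Finset.range (j+2),
            ((j+1).choose i : ℂ) * ((k.choose i : ℂ) * (i.factorial : ℂ) * poch (x+i) (k-i)) :=
        Finset.sum_congr rfl fun i _ => by ring
      rw [hgoal, split]
      have hA : ∑ i ∈ Finset.range (j+1),
          (j.choose i : ℂ) * ((k.choose i : ℂ) * (i.factorial : ℂ) * poch (x+i) (k-i))
          = poch (x+j) k := by
        rw [ih x k]; exact Finset.sum_congr rfl fun i _ => by ring
      have hB : ∑ i ∈ Finset.range (j+1),
          (j.choose i : ℂ) * ((k.choose (i+1) : ℂ) * ((i+1).factorial : ℂ) *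
            poch (x+((i+1 : ℕ) : ℂ)) (k-(i+1)))
          = (k : ℂ) * poch (x+1+j) (k-1) := by
        cases k with
        | zero => simp
        | succ k' =>
            have hterm : ∀ i ∈ Finset.range (j+1),
                (j.choose i : ℂ) * (((k'+1).choose (i+1) : ℂ) * ((i+1).factorial : ℂ) *
                  poch (x+((i+1 : ℕ) : ℂ)) (k'+1-(i+1)))
                = ((k'+1 : ℕ) : ℂ) * ((j.choose i : ℂ) * (k'.choose i : ℂ) *
                    (i.factorial : ℂ) * poch ((x+1)+i) (k'-i)) := by
              intro i _
              have hc0 := congrArg (fun t : ℕ => (t : ℂ)) (Nat.add_one_mul_choose_eq k' i)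
              push_cast at hc0
              have hsub : k'+1-(i+1) = k'-i := by omega
              have hx1 : x + ((i+1 : ℕ) : ℂ) = (x+1) + (i : ℕ) := by push_cast; ring
              have hfac : (((i+1).factorial : ℕ) : ℂ) = ((i : ℂ)+1) * (i.factorial : ℂ) := by
                rw [Nat.factorial_succ]; push_cast; ring
              rw [hsub, hx1, hfac]
              push_cast
              linear_combination (-(j.choose i : ℂ) * (i.factorial : ℂ) *
                poch ((x+1)+(i : ℕ)) (k'-i)) * hc0
            rw [Finset.sum_congr rfl hterm, ← Finset.mul_sum, ← ih (x+1) k']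
            push_cast
            ring
      rw [hA, hB]
      cases k with
      | zero => simp [poch_zero]
      | succ k' =>
          have hsh := poch_shift (x + j) k'
          have hx : x + ((j+1 : ℕ) : ℂ) = (x + (j : ℕ)) + 1 := by push_cast; ring
          rw [hx, hsh]
          have hx2 : x + (j : ℕ) + 1 = x + 1 + (j : ℕ) := by ring
          rw [hx2]
          push_cast
          ring

lemma alt_sum (m i : ℕ) (u : ℂ) :
    ∑ j ∈ Finset.range (m+1), (-1 : ℂ)^j * (m.choose j : ℂ) * (j.choose i : ℂ) * u^j
      = (-1)^i * (m.choose i : ℂ) * u^i * (1-u)^(m-i) := by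
  rcases lt_or_ge m i with h | h
  · rw [Nat.choose_eq_zero_of_lt h]
    rw [Finset.sum_eq_zero]
    · simp
    intro j hj
    have hji : j < i := lt_of_le_of_lt (Nat.lt_succ_iff.1 (Finset.mem_range.1 hj)) h
    rw [Nat.choose_eq_zero_of_lt hji]
    simp
  · rw [Finset.range_eq_Ico, ← Finset.sum_Ico_consecutive _ (Nat.zero_le i)
      (by omega : i ≤ m+1)]
    have h0 : ∑ j ∈ Finset.Ico 0 i, (-1:ℂ)^j * (m.choose j : ℂ) * (j.choose i : ℂ) * u^j
        = 0 := by
      refine Finset.sum_eq_zero fun j hj => ?_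
      rw [Nat.choose_eq_zero_of_lt (Finset.mem_Ico.1 hj).2]
      simp
    rw [h0, zero_add, Finset.sum_Ico_eq_sum_range]
    have hterm : ∀ j ∈ Finset.range (m+1-i),
        (-1:ℂ)^(i+j) * (m.choose (i+j) : ℂ) * ((i+j).choose i : ℂ) * u^(i+j)
        = ((-1:ℂ)^i * (m.choose i : ℂ) * u^i) * (((m-i).choose j : ℂ) * (-u)^j) := by
      intro j hj
      have hj' : i + j ≤ m := by have := Finset.mem_range.1 hj; omega
      have hc := Nat.choose_mul (n := m) (Nat.le_add_right i j)
      have hsub : i + j - i = j := by omega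
      rw [hsub] at hc
      have hc' : (m.choose (i+j) : ℂ) * ((i+j).choose i : ℂ)
          = (m.choose i : ℂ) * ((m-i).choose j : ℂ) := by exact_mod_cast congrArg Nat.cast hc
      rw [pow_add, pow_add, neg_pow u j]
      linear_combination ((-1:ℂ)^i * (-1)^j * u^i * u^j) * hc'
    rw [Finset.sum_congr rfl hterm, ← Finset.mul_sum]
    have hbin : (1 - u)^(m-i) = ∑ j ∈ Finset.range (m-i+1), ((m-i).choose j : ℂ) * (-u)^j := by
      have hb := add_pow (-u) 1 (m-i)
      simp only [one_pow, mul_one] at hb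
      rw [show (1:ℂ) - u = -u + 1 by ring, hb]
      exact Finset.sum_congr rfl fun j _ => by ring
    have hmi : m + 1 - i = m - i + 1 := by omega
    rw [hmi, ← hbin]

lemma key_term (b : ℂ) (hb : ∀ i : ℕ, poch b i ≠ 0) (u v : ℂ) (m n j k : ℕ)
    (hj : j ≤ m) :
    poch (-(m : ℂ)) j * poch (-(n : ℂ)) k * poch b (j + k) * u ^ j * v ^ k /
      (poch b j * poch b k * (j.factorial : ℂ) * (k.factorial : ℂ))
    = ∑ i ∈ Finset.range (m + 1),
        ((i.factorial : ℂ) / poch b i) *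
        ((-1 : ℂ) ^ j * (m.choose j : ℂ) * (j.choose i : ℂ) * u ^ j) *
        ((-1 : ℂ) ^ k * (n.choose k : ℂ) * (k.choose i : ℂ) * v ^ k) := by
  rw [← Finset.sum_subset (Finset.range_subset_range.2 (by omega : j + 1 ≤ m + 1))
      (fun i _ hi => by
        have hji : j < i := by
          simp only [Finset.mem_range] at hi
          omega
        rw [Nat.choose_eq_zero_of_lt hji]
        simp)]
  have hpv : poch b (j + k) = poch b j * ∑ i ∈ Finset.range (j + 1),
      (j.choose i : ℂ) * (k.choose i : ℂ) * (i.factorial : ℂ) * poch (b + i) (k - i) := by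
    rw [poch_add, poch_vander]
  rw [hpv, poch_neg_nat, poch_neg_nat, Nat.descFactorial_eq_factorial_mul_choose,
    Nat.descFactorial_eq_factorial_mul_choose]
  rw [Finset.mul_sum]
  have hre : ((-1:ℂ)^j * ((j.factorial * m.choose j : ℕ) : ℂ)) * ((-1:ℂ)^k * ((k.factorial * n.choose k : ℕ) : ℂ)) *
      (∑ i ∈ Finset.range (j+1), poch b j * ((j.choose i : ℂ) * (k.choose i : ℂ) * (i.factorial : ℂ) * poch (b + i) (k - i))) * u ^ j * v ^ k
      = ∑ i ∈ Finset.range (j+1), ((-1:ℂ)^j * ((j.factorial * m.choose j : ℕ) : ℂ)) * ((-1:ℂ)^k * ((k.factorial * n.choose k : ℕ) : ℂ)) *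
        (poch b j * ((j.choose i : ℂ) * (k.choose i : ℂ) * (i.factorial : ℂ) * poch (b + i) (k - i))) * u ^ j * v ^ k := by
    rw [Finset.mul_sum, Finset.sum_mul, Finset.sum_mul]
  rw [hre, Finset.sum_div]
  refine Finset.sum_congr rfl fun i hi => ?_
  rcases le_or_gt i k with hik | hik
  · have hpk : poch b k = poch b i * poch (b + i) (k - i) := by
      rw [← poch_add]
      congr 1
      omega
    have h1 := hb j
    have h2 := hb k
    have h3 := hb i
    have h4 : poch (b + i) (k - i) ≠ 0 := by
      intro h
      apply h2
      rw [hpk, h, mul_zero]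
    have hjf : ((j.factorial : ℕ) : ℂ) ≠ 0 := Nat.cast_ne_zero.2 j.factorial_ne_zero
    have hkf : ((k.factorial : ℕ) : ℂ) ≠ 0 := Nat.cast_ne_zero.2 k.factorial_ne_zero
    have hD : poch b j * (poch b i * poch (b + i) (k - i)) * (j.factorial : ℂ) *
        (k.factorial : ℂ) ≠ 0 := by
      exact mul_ne_zero (mul_ne_zero (mul_ne_zero h1 (mul_ne_zero h3 h4)) hjf) hkf
    rw [hpk, div_eq_iff hD]
    field_simp [h3]
    push_cast
    ring
  · rw [Nat.choose_eq_zero_of_lt hik]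
    simp

lemma key_lemma (b s : ℂ) (hb : ∀ i : ℕ, poch b i ≠ 0) (hs : s ≠ 0) (m n : ℕ) :
    ∑ j ∈ Finset.range (m + 1), ∑ k ∈ Finset.range (n + 1),
      poch (-(m : ℂ)) j * poch (-(n : ℂ)) k * poch b (j + k) * (1 + s) ^ j * (1 - s) ^ k /
        (poch b j * poch b k * (j.factorial : ℂ) * (k.factorial : ℂ))
    = (-1) ^ m * s ^ (n + m) * ∑ i ∈ Finset.range (n + 1),
        poch (-(n : ℂ)) i * poch (-(m : ℂ)) i * (1 - 1 / s ^ 2) ^ i /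
          (poch b i * (i.factorial : ℂ)) := by
  have P : ℕ → ℂ := fun i => (i.factorial : ℂ) / poch b i
  calc
    ∑ j ∈ Finset.range (m + 1), ∑ k ∈ Finset.range (n + 1),
      poch (-(m : ℂ)) j * poch (-(n : ℂ)) k * poch b (j + k) * (1 + s) ^ j * (1 - s) ^ k /
        (poch b j * poch b k * (j.factorial : ℂ) * (k.factorial : ℂ))
      = ∑ j ∈ Finset.range (m + 1), ∑ k ∈ Finset.range (n + 1), ∑ i ∈ Finset.range (m + 1),
        ((i.factorial : ℂ) / poch b i) *
        ((-1 : ℂ) ^ j * (m.choose j : ℂ) * (j.choose i : ℂ) * (1 + s) ^ j) *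
        ((-1 : ℂ) ^ k * (n.choose k : ℂ) * (k.choose i : ℂ) * (1 - s) ^ k) := by
        refine Finset.sum_congr rfl fun j hj => Finset.sum_congr rfl fun k hk => ?_
        exact key_term b hb (1 + s) (1 - s) m n j k
          (by simp only [Finset.mem_range] at hj; omega)
    _ = ∑ j ∈ Finset.range (m + 1), ∑ i ∈ Finset.range (m + 1), ∑ k ∈ Finset.range (n + 1),
        ((i.factorial : ℂ) / poch b i) *
        ((-1 : ℂ) ^ j * (m.choose j : ℂ) * (j.choose i : ℂ) * (1 + s) ^ j) *
        ((-1 : ℂ) ^ k * (n.choose k : ℂ) * (k.choose i : ℂ) * (1 - s) ^ k) :=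
        Finset.sum_congr rfl fun j _ => Finset.sum_comm
    _ = ∑ i ∈ Finset.range (m + 1), ∑ j ∈ Finset.range (m + 1), ∑ k ∈ Finset.range (n + 1),
        ((i.factorial : ℂ) / poch b i) *
        ((-1 : ℂ) ^ j * (m.choose j : ℂ) * (j.choose i : ℂ) * (1 + s) ^ j) *
        ((-1 : ℂ) ^ k * (n.choose k : ℂ) * (k.choose i : ℂ) * (1 - s) ^ k) :=
        Finset.sum_comm
    _ = ∑ i ∈ Finset.range (m + 1),
        ((i.factorial : ℂ) / poch b i) *
        (∑ j ∈ Finset.range (m + 1),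
          (-1 : ℂ) ^ j * (m.choose j : ℂ) * (j.choose i : ℂ) * (1 + s) ^ j) *
        (∑ k ∈ Finset.range (n + 1),
          (-1 : ℂ) ^ k * (n.choose k : ℂ) * (k.choose i : ℂ) * (1 - s) ^ k) := by
        refine Finset.sum_congr rfl fun i _ => ?_
        rw [mul_assoc, Finset.sum_mul_sum, Finset.mul_sum]
        refine Finset.sum_congr rfl fun j _ => ?_
        rw [Finset.mul_sum]
        refine Finset.sum_congr rfl fun k _ => ?_
        ring
    _ = ∑ i ∈ Finset.range (m + 1),
        ((i.factorial : ℂ) / poch b i) *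
        ((-1 : ℂ) ^ i * (m.choose i : ℂ) * (1 + s) ^ i * (1 - (1 + s)) ^ (m - i)) *
        ((-1 : ℂ) ^ i * (n.choose i : ℂ) * (1 - s) ^ i * (1 - (1 - s)) ^ (n - i)) := by
        refine Finset.sum_congr rfl fun i _ => ?_
        rw [alt_sum m i (1 + s), alt_sum n i (1 - s)]
    _ = (-1) ^ m * s ^ (n + m) * ∑ i ∈ Finset.range (n + 1),
        poch (-(n : ℂ)) i * poch (-(m : ℂ)) i * (1 - 1 / s ^ 2) ^ i /
          (poch b i * (i.factorial : ℂ)) := by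
        rw [Finset.mul_sum]
        have hL : ∑ i ∈ Finset.range (m + 1),
            (i.factorial : ℂ) / poch b i *
              ((-1 : ℂ) ^ i * (m.choose i : ℂ) * (1 + s) ^ i * (1 - (1 + s)) ^ (m - i)) *
              ((-1 : ℂ) ^ i * (n.choose i : ℂ) * (1 - s) ^ i * (1 - (1 - s)) ^ (n - i))
            = ∑ i ∈ Finset.range (m + n + 1),
            (i.factorial : ℂ) / poch b i *
              ((-1 : ℂ) ^ i * (m.choose i : ℂ) * (1 + s) ^ i * (1 - (1 + s)) ^ (m - i)) *
              ((-1 : ℂ) ^ i * (n.choose i : ℂ) * (1 - s) ^ i * (1 - (1 - s)) ^ (n - i)) := by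
          refine Finset.sum_subset (Finset.range_subset_range.2 (by omega : m + 1 ≤ m + n + 1))
            (fun i _ hi => ?_)
          have him : m < i := by simp only [Finset.mem_range] at hi; omega
          rw [Nat.choose_eq_zero_of_lt him]
          simp
        have hR : ∑ i ∈ Finset.range (n + 1),
            (-1 : ℂ) ^ m * s ^ (n + m) *
              (poch (-(n : ℂ)) i * poch (-(m : ℂ)) i * (1 - 1 / s ^ 2) ^ i /
                (poch b i * (i.factorial : ℂ)))
            = ∑ i ∈ Finset.range (m + n + 1),
            (-1 : ℂ) ^ m * s ^ (n + m) *
              (poch (-(n : ℂ)) i * poch (-(m : ℂ)) i * (1 - 1 / s ^ 2) ^ i /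
                (poch b i * (i.factorial : ℂ))) := by
          refine Finset.sum_subset (Finset.range_subset_range.2 (by omega : n + 1 ≤ m + n + 1))
            (fun i _ hi => ?_)
          have hin : n < i := by simp only [Finset.mem_range] at hi; omega
          rw [poch_neg_nat_of_lt hin]
          simp
        rw [hL, hR]
        refine Finset.sum_congr rfl fun i _ => ?_
        rcases le_or_gt i m with him | him
        · rcases le_or_gt i n with hin | hin
          · obtain ⟨m', rfl⟩ : ∃ m', m = i + m' := ⟨m - i, by omega⟩
            obtain ⟨n', rfl⟩ : ∃ n', n = i + n' := ⟨n - i, by omega⟩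
            rw [Nat.add_sub_cancel_left, Nat.add_sub_cancel_left, poch_neg_nat, poch_neg_nat,
              Nat.descFactorial_eq_factorial_mul_choose, Nat.descFactorial_eq_factorial_mul_choose]
            have hsq : (1 : ℂ) - 1 / s ^ 2 = ((1 + s) * (1 - s)) * (-1) / s ^ 2 := by
              field_simp
              ring
            rw [hsq, div_pow, mul_pow, mul_pow]
            have hbi := hb i
            have hfi : ((i.factorial : ℕ) : ℂ) ≠ 0 := Nat.cast_ne_zero.2 i.factorial_ne_zero
            have hs2 : ((s : ℂ) ^ 2) ^ i ≠ 0 := pow_ne_zero _ (pow_ne_zero _ hs)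
            push_cast
            field_simp [hbi, hfi, hs2]
            ring_nf
            have h2i : (-1 : ℂ) ^ (i * 2) = 1 := by
              rw [mul_comm, pow_mul]
              norm_num
            have h4i : (-1 : ℂ) ^ (i * 4) = 1 := by
              rw [mul_comm, pow_mul]
              norm_num
            rw [h2i]
            ring
          · rw [Nat.choose_eq_zero_of_lt hin, poch_neg_nat_of_lt hin]
            simp
        · rw [Nat.choose_eq_zero_of_lt him, poch_neg_nat_of_lt him]
          simp


lemma F11_term (n : ℕ) (b x : ℂ) :
    F11 (-(n : ℂ)) b x = ∑ k ∈ Finset.range (n + 1),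
      poch (-(n : ℂ)) k * x ^ k / (poch b k * (k.factorial : ℂ)) := by
  refine tsum_eq_sum fun k hk => ?_
  have : n < k := by simp only [Finset.mem_range] at hk; omega
  rw [poch_neg_nat_of_lt this, zero_mul, zero_div]

lemma F21_term (n : ℕ) (b c x : ℂ) :
    F21 (-(n : ℂ)) b c x = ∑ k ∈ Finset.range (n + 1),
      poch (-(n : ℂ)) k * poch b k * x ^ k / (poch c k * (k.factorial : ℂ)) := by
  refine tsum_eq_sum fun k hk => ?_
  have : n < k := by simp only [Finset.mem_range] at hk; omega
  rw [poch_neg_nat_of_lt this, zero_mul, zero_mul, zero_div]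

lemma gamma_shift {b : ℝ} (hb : 0 < b) (N : ℕ) :
    Real.Gamma (b + N) = Real.Gamma b * ∏ i ∈ Finset.range N, (b + i) := by
  induction N with
  | zero => simp
  | succ N ih =>
      have hbn : b + (N : ℝ) ≠ 0 := by positivity
      have h1 : b + ((N + 1 : ℕ) : ℝ) = (b + N) + 1 := by push_cast; ring
      rw [h1, Real.Gamma_add_one hbn, ih, Finset.prod_range_succ]
      ring

lemma poch_ofReal (b : ℝ) (N : ℕ) :
    ((∏ i ∈ Finset.range N, (b + i) : ℝ) : ℂ) = poch (b : ℂ) N := by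
  rw [poch]
  push_cast
  rfl

open MeasureTheory in
lemma integrable_aux {p c : ℝ} (hp : -1 < p) (hc : 0 < c) :
    IntegrableOn (fun x : ℝ => x ^ p * Real.exp (-(c * x))) (Set.Ioi 0) := by
  have := integrableOn_rpow_mul_exp_neg_mul_rpow hp zero_lt_one hc
  refine this.congr_fun (fun x _ => ?_) measurableSet_Ioi
  beta_reduce
  rw [Real.rpow_one, neg_mul]


/-- Generalized Laguerre polynomial `L_n^{(α)}(x)`. -/
noncomputable def laguerre (n : ℕ) (α x : ℂ) : ℂ :=
  poch (α + 1) n / n.factorial * F11 (-(n : ℂ)) (α + 1) x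

open MeasureTheory

lemma integral_ofReal' {X : Type*} [MeasurableSpace X] {μ : Measure X} {f : X → ℝ} :
    ∫ x, ((f x : ℝ) : ℂ) ∂μ = ((∫ x, f x ∂μ : ℝ) : ℂ) :=
  integral_ofReal


/-- Meixner polynomial `M_n(x; β; c) = ₂F₁(-n, -x; β; 1 - 1/c)`. -/
noncomputable def meixnerPoly (n : ℕ) (x β c : ℂ) : ℂ :=
  F21 (-(n : ℂ)) (-x) β (1 - 1 / c)

/-- `∫_0^∞ L_m^{(a)}(ρx) L_n^{(a)}(x) e^{-(ρ+1)x/2} x^a dx` expressed via a Meixner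
polynomial, for `ρ > 1`, `a > -1`. -/
theorem laguerre_product_integral_meixner (ρ a : ℝ) (hρ : 1 < ρ) (ha : -1 < a) (m n : ℕ) :
    ∫ x in Set.Ioi (0 : ℝ),
        laguerre m (a : ℂ) ((ρ : ℂ) * x) * laguerre n (a : ℂ) (x : ℂ) *
          Complex.exp (-((ρ : ℂ) + 1) * x / 2) * ((x ^ a : ℝ) : ℂ)
      = (-1) ^ m * ((Real.Gamma (a + n + 1) / n.factorial : ℝ) : ℂ) *
          (poch ((a : ℂ) + 1) m / m.factorial) *
          (((2 / (ρ + 1)) ^ (a + 1) : ℝ) : ℂ) *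
          ((((ρ - 1) / (ρ + 1)) ^ (n + m) : ℝ) : ℂ) *
          meixnerPoly n (m : ℂ) ((a : ℂ) + 1) ((((ρ - 1) / (ρ + 1)) ^ 2 : ℝ) : ℂ) := by
  have hρ1 : (0 : ℝ) < ρ + 1 := by linarith
  have hc : (0 : ℝ) < (ρ + 1) / 2 := by linarith
  have ht : (0 : ℝ) < 2 / (ρ + 1) := by positivity
  have hsr : (0 : ℝ) < (ρ - 1) / (ρ + 1) := div_pos (by linarith) hρ1
  have hb : (0 : ℝ) < a + 1 := by linarith
  have hBr : ((a : ℂ) + 1) = ((a + 1 : ℝ) : ℂ) := by push_cast; ring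
  have hBne : ∀ i : ℕ, poch ((a : ℂ) + 1) i ≠ 0 := by
    intro i; rw [hBr]; exact poch_ne_zero_of_pos hb i
  set B : ℂ := (a : ℂ) + 1 with hB
  set c : ℝ := (ρ + 1) / 2 with hc_def
  set t : ℝ := 2 / (ρ + 1) with ht_def
  set sr : ℝ := (ρ - 1) / (ρ + 1) with hsr_def
  set K : ℕ → ℕ → ℂ := fun j k =>
    (poch B m / (m.factorial : ℂ)) * (poch B n / (n.factorial : ℂ)) *
    (poch (-(m : ℂ)) j * (ρ : ℂ) ^ j / (poch B j * (j.factorial : ℂ))) *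
    (poch (-(n : ℂ)) k / (poch B k * (k.factorial : ℂ))) with hK
  -- pointwise expansion of the integrand
  have hpt : Set.EqOn
      (fun x : ℝ => laguerre m (a : ℂ) ((ρ : ℂ) * x) * laguerre n (a : ℂ) (x : ℂ) *
        Complex.exp (-((ρ : ℂ) + 1) * x / 2) * ((x ^ a : ℝ) : ℂ))
      (fun x : ℝ => ∑ j ∈ Finset.range (m + 1), ∑ k ∈ Finset.range (n + 1),
        K j k * (((x ^ (a + ((j + k : ℕ) : ℝ)) * Real.exp (-(c * x)) : ℝ)) : ℂ))
      (Set.Ioi 0) := by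
    intro x hx
    have hx0 : (0 : ℝ) < x := hx
    simp only [laguerre, F11_term]
    have e1 : (poch B m / (m.factorial : ℂ) * ∑ j ∈ Finset.range (m + 1),
          poch (-(m : ℂ)) j * ((ρ : ℂ) * x) ^ j / (poch B j * (j.factorial : ℂ))) *
        (poch B n / (n.factorial : ℂ) * ∑ k ∈ Finset.range (n + 1),
          poch (-(n : ℂ)) k * (x : ℂ) ^ k / (poch B k * (k.factorial : ℂ))) *
        Complex.exp (-((ρ : ℂ) + 1) * x / 2) * ((x ^ a : ℝ) : ℂ)
        = ((∑ j ∈ Finset.range (m + 1),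
            poch (-(m : ℂ)) j * ((ρ : ℂ) * x) ^ j / (poch B j * (j.factorial : ℂ))) *
          (∑ k ∈ Finset.range (n + 1),
            poch (-(n : ℂ)) k * (x : ℂ) ^ k / (poch B k * (k.factorial : ℂ)))) *
          ((poch B m / (m.factorial : ℂ)) * (poch B n / (n.factorial : ℂ)) *
            Complex.exp (-((ρ : ℂ) + 1) * x / 2) * ((x ^ a : ℝ) : ℂ)) := by ring
    rw [e1, Finset.sum_mul_sum, Finset.sum_mul]
    refine Finset.sum_congr rfl fun j _ => ?_
    rw [Finset.sum_mul]
    refine Finset.sum_congr rfl fun k _ => ?_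
    have hE : Complex.exp (-((ρ : ℂ) + 1) * x / 2) = ((Real.exp (-(c * x)) : ℝ) : ℂ) := by
      rw [Complex.ofReal_exp]
      congr 1
      rw [hc_def]
      push_cast
      ring
    have hxp : (x : ℝ) ^ (a + ((j + k : ℕ) : ℝ)) = x ^ a * x ^ (j + k) := by
      rw [Real.rpow_add hx0, Real.rpow_natCast]
    rw [hE, hxp, hK]
    push_cast
    rw [mul_pow ((ρ:ℂ)) ((x:ℂ)) j, pow_add ((x:ℂ)) j k]
    ring
  rw [setIntegral_congr_fun measurableSet_Ioi hpt]
  -- integrability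
  have hint : ∀ j k : ℕ, Integrable
      (fun x : ℝ => K j k * (((x ^ (a + ((j + k : ℕ) : ℝ)) * Real.exp (-(c * x)) : ℝ)) : ℂ))
      (volume.restrict (Set.Ioi 0)) := by
    intro j k
    apply Integrable.const_mul
    have h1 : (-1 : ℝ) < a + ((j + k : ℕ) : ℝ) := by
      have : (0 : ℝ) ≤ ((j + k : ℕ) : ℝ) := Nat.cast_nonneg _
      linarith
    exact (integrable_aux h1 hc).ofReal
  rw [integral_finset_sum _ (fun j _ => integrable_finset_sum _ (fun k hk => hint j _))]
  have hev : ∀ j k : ℕ,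
      (∫ x in Set.Ioi (0:ℝ), K j k * (((x ^ (a + ((j + k : ℕ) : ℝ)) * Real.exp (-(c * x)) : ℝ)) : ℂ))
      = K j k * (((t ^ (a + 1) * Real.Gamma (a + 1) : ℝ)) : ℂ) *
          ((t ^ (j + k) : ℝ) : ℂ) * poch B (j + k) := by
    intro j k
    rw [MeasureTheory.integral_const_mul]
    rw [integral_ofReal']
    have h1 : (0 : ℝ) < a + ((j + k : ℕ) : ℝ) + 1 := by
      have : (0 : ℝ) ≤ ((j + k : ℕ) : ℝ) := Nat.cast_nonneg _
      linarith
    have heval := Real.integral_rpow_mul_exp_neg_mul_Ioi h1 hc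
    rw [add_sub_cancel_right] at heval
    rw [heval]
    have h2 : (1 / c) = t := by rw [hc_def, ht_def, one_div_div]
    have h3 : a + ((j + k : ℕ) : ℝ) + 1 = (a + 1) + ((j + k : ℕ) : ℝ) := by ring
    rw [h2, h3, Real.rpow_add ht, Real.rpow_natCast]
    rw [gamma_shift hb (j + k)]
    rw [show t ^ (a+1) * t ^ (j+k) * (Real.Gamma (a+1) * ∏ i ∈ Finset.range (j+k), (a+1+i))
      = (t ^ (a+1) * Real.Gamma (a+1)) * (t ^ (j+k)) * (∏ i ∈ Finset.range (j+k), ((a+1)+i)) by ring]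
    push_cast [poch_ofReal (a+1) (j+k), ← hBr]
    ring
  have h2 : (∑ j ∈ Finset.range (m + 1), ∫ x in Set.Ioi (0:ℝ),
        ∑ k ∈ Finset.range (n + 1),
          K j k * (((x ^ (a + ((j + k : ℕ) : ℝ)) * Real.exp (-(c * x)) : ℝ)) : ℂ))
      = ∑ j ∈ Finset.range (m + 1), ∑ k ∈ Finset.range (n + 1),
          K j k * (((t ^ (a + 1) * Real.Gamma (a + 1) : ℝ)) : ℂ) *
            ((t ^ (j + k) : ℝ) : ℂ) * poch B (j + k) := by
    refine Finset.sum_congr rfl fun j _ => ?_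
    rw [integral_finset_sum _ (fun k _ => hint j k)]
    exact Finset.sum_congr rfl fun k _ => hev j k
  rw [h2]
  have hρc : ((ρ : ℝ) : ℂ) + 1 ≠ 0 := by
    have : ((ρ + 1 : ℝ) : ℂ) ≠ 0 := Complex.ofReal_ne_zero.2 (by linarith)
    push_cast at this
    exact this
  have hu : ((ρ : ℝ) : ℂ) * ((t : ℝ) : ℂ) = 1 + ((sr : ℝ) : ℂ) := by
    rw [ht_def, hsr_def]
    push_cast
    field_simp
    ring
  have hv : ((t : ℝ) : ℂ) = 1 - ((sr : ℝ) : ℂ) := by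
    rw [ht_def, hsr_def]
    push_cast
    field_simp
    norm_num
  have hsne : ((sr : ℝ) : ℂ) ≠ 0 := Complex.ofReal_ne_zero.2 hsr.ne'
  have hterm : ∀ j k : ℕ,
      K j k * (((t ^ (a + 1) * Real.Gamma (a + 1) : ℝ)) : ℂ) *
        ((t ^ (j + k) : ℝ) : ℂ) * poch B (j + k)
      = ((t ^ (a + 1) * Real.Gamma (a + 1) : ℝ) : ℂ) *
          ((poch B m / (m.factorial : ℂ)) * (poch B n / (n.factorial : ℂ))) *
        (poch (-(m : ℂ)) j * poch (-(n : ℂ)) k * poch B (j + k) *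
          (1 + ((sr : ℝ) : ℂ)) ^ j * (1 - ((sr : ℝ) : ℂ)) ^ k /
          (poch B j * poch B k * (j.factorial : ℂ) * (k.factorial : ℂ))) := by
    intro j k
    rw [hK, ← hu, ← hv, mul_pow]
    push_cast
    rw [pow_add ((t : ℂ)) j k]
    ring
  simp_rw [hterm, ← Finset.mul_sum]
  rw [key_lemma B ((sr : ℝ) : ℂ) hBne hsne m n]
  have hg : Real.Gamma (a + n + 1)
      = Real.Gamma (a + 1) * ∏ i ∈ Finset.range n, (a + 1 + i) := by
    rw [show a + (n : ℝ) + 1 = (a + 1) + (n : ℝ) by ring, gamma_shift hb n]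
  have hmx : meixnerPoly n (m : ℂ) B (((sr ^ 2 : ℝ)) : ℂ)
      = ∑ i ∈ Finset.range (n + 1),
          poch (-(n : ℂ)) i * poch (-(m : ℂ)) i * (1 - 1 / ((sr : ℝ) : ℂ) ^ 2) ^ i /
            (poch B i * (i.factorial : ℂ)) := by
    rw [meixnerPoly, F21_term]
    have : (1 : ℂ) - 1 / (((sr ^ 2 : ℝ)) : ℂ) = 1 - 1 / ((sr : ℝ) : ℂ) ^ 2 := by
      push_cast
      ring
    rw [this]
  rw [hmx, hg]
  have hpn : ((∏ i ∈ Finset.range n, (a + 1 + i) : ℝ) : ℂ) = poch B n := by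
    rw [hBr]
    exact poch_ofReal (a + 1) n
  have hnf : ((n.factorial : ℕ) : ℂ) ≠ 0 := Nat.cast_ne_zero.2 n.factorial_ne_zero
  push_cast [hpn]
  ring
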